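/- Let n ≥ 1, Δ ≥ 0, and T > 0 with p = e^{−T}. Then ∫_T^{(1+Δ)T} (1 − e^{−T})^{n−1} e^{−x} dx + ∫_{(1+Δ)T}^∞ (1 − e^{−x/(1+Δ)})^{n−1} e^{−x} dx = p(1−p)^{n−1}(1 − p^Δ) + ∑_{k=0}^{n−1} (−1)^k C(n−1,k) ((1+Δ)/(k+1+Δ)) p^{k+1+Δ}. -/

import Mathlib

open Finset Real MeasureTheory intervalIntegral

lemma aux_int_exp (a c : ℝ) (ha : 0 < a) :
    ∫ x in Set.Ioi c, Real.exp (-(a * x)) = Real.exp (-(a * c)) / a := by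
  have h := MeasureTheory.integral_comp_mul_left_Ioi (fun x => Real.exp (-x)) c ha
  simp only [integral_exp_neg_Ioi, smul_eq_mul] at h
  rw [h, mul_comm, ← div_eq_mul_inv]

theorem stmt_16 (n : ℕ) (hn : 1 ≤ n) (Δ : ℝ) (hΔ : 0 ≤ Δ) (T p : ℝ) (hT : 0 < T)
    (hp : p = Real.exp (-T)) :
    (∫ x in T..((1 + Δ) * T), (1 - Real.exp (-T)) ^ (n - 1) * Real.exp (-x)) +
        (∫ x in Set.Ioi ((1 + Δ) * T),
          (1 - Real.exp (-(x / (1 + Δ)))) ^ (n - 1) * Real.exp (-x)) =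
      p * (1 - p) ^ (n - 1) * (1 - p ^ Δ) +
        ∑ k ∈ Finset.range n,
          (-1 : ℝ) ^ k * (n - 1).choose k * ((1 + Δ) / (k + 1 + Δ)) * p ^ ((k : ℝ) + 1 + Δ) := by
  have h1Δ : (0:ℝ) < 1 + Δ := by linarith
  -- first integral
  have hI1 : (∫ x in T..((1 + Δ) * T), (1 - Real.exp (-T)) ^ (n - 1) * Real.exp (-x))
      = p * (1 - p) ^ (n - 1) * (1 - p ^ Δ) := by
    rw [intervalIntegral.integral_const_mul]
    have h2 : (∫ x in T..((1 + Δ) * T), Real.exp (-x))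
        = Real.exp (-T) - Real.exp (-((1 + Δ) * T)) := by
      have := intervalIntegral.integral_comp_neg (a := T) (b := (1 + Δ) * T)
        (fun x => Real.exp x)
      rw [this, integral_exp]
    rw [h2]
    have : Real.exp (-((1 + Δ) * T)) = p * p ^ Δ := by
      rw [hp, ← Real.exp_mul, ← Real.exp_add]; ring_nf
    rw [this, hp]
    ring
  rw [hI1]
  -- second integral
  have key : ∀ x : ℝ, (1 - Real.exp (-(x / (1 + Δ)))) ^ (n - 1) * Real.exp (-x)
      = ∑ k ∈ Finset.range n, (-1 : ℝ) ^ k * (n - 1).choose k *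
          Real.exp (-(((k : ℝ) + 1 + Δ) / (1 + Δ) * x)) := by
    intro x
    have hexp : ∀ k : ℕ, Real.exp (-(x / (1 + Δ))) ^ k * Real.exp (-x)
        = Real.exp (-(((k : ℝ) + 1 + Δ) / (1 + Δ) * x)) := by
      intro k
      rw [← Real.exp_nat_mul, ← Real.exp_add]
      congr 1
      field_simp
      ring
    have hbin : (1 - Real.exp (-(x / (1 + Δ)))) ^ (n - 1)
        = ∑ k ∈ Finset.range n, (-1 : ℝ) ^ k * (n - 1).choose k *
            Real.exp (-(x / (1 + Δ))) ^ k := by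
      rw [sub_eq_add_neg, add_comm, add_pow]
      rw [show n - 1 + 1 = n from Nat.succ_pred_eq_of_pos hn]
      apply Finset.sum_congr rfl
      intro k _
      rw [neg_pow]
      ring
    rw [hbin, Finset.sum_mul]
    apply Finset.sum_congr rfl
    intro k _
    rw [mul_assoc, hexp k]
  rw [MeasureTheory.setIntegral_congr_fun measurableSet_Ioi (fun x _ => key x)]
  have hint : ∀ k ∈ Finset.range n, IntegrableOn
      (fun x => (-1 : ℝ) ^ k * (n - 1).choose k *
        Real.exp (-(((k : ℝ) + 1 + Δ) / (1 + Δ) * x))) (Set.Ioi ((1 + Δ) * T)) := by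
    intro k _
    apply Integrable.const_mul
    have ha : (0:ℝ) < ((k : ℝ) + 1 + Δ) / (1 + Δ) := by
      apply div_pos _ h1Δ
      have : (0:ℝ) ≤ (k : ℝ) := Nat.cast_nonneg k
      linarith
    have := exp_neg_integrableOn_Ioi ((1 + Δ) * T) ha
    simpa [neg_mul, IntegrableOn] using this
  rw [MeasureTheory.integral_finset_sum _ hint]
  congr 1
  apply Finset.sum_congr rfl
  intro k _
  have ha : (0:ℝ) < ((k : ℝ) + 1 + Δ) / (1 + Δ) := by
    apply div_pos _ h1Δ
    have : (0:ℝ) ≤ (k : ℝ) := Nat.cast_nonneg k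
    linarith
  rw [MeasureTheory.integral_const_mul, aux_int_exp _ _ ha]
  have harg : ((k : ℝ) + 1 + Δ) / (1 + Δ) * ((1 + Δ) * T) = ((k : ℝ) + 1 + Δ) * T := by
    field_simp
  have hpk : p ^ ((k : ℝ) + 1 + Δ) = Real.exp (-(((k : ℝ) + 1 + Δ) * T)) := by
    rw [hp, ← Real.exp_mul]; ring_nf
  rw [harg, hpk]
  field_simp
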